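/- Extending a segment of an unrooted tree by one position increases similarity by at most 2: for a rooted tree T and unrooted tree Q, sim(T, Q[i, j+1)) ≤ sim(T, Q[i,j)) + 2 whenever i ≤ j and j−i+1 ≤ 2|E(Q)|, and likewise sim(T, Q[i−1, j)) ≤ sim(T, Q[i,j)) + 2. -/

import Mathlib

/-- A rooted, ordered, edge-labeled tree: a root with an ordered list of
(edge label, child subtree) pairs. -/
inductive RTree (α : Type) : Type
  | node : List (α × RTree α) → RTree α

namespace RTree
variable {α : Type}

mutual
  /-- Number of edges of a rooted tree. -/
  def numEdges : RTree α → ℕ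
    | .node cs => numEdgesL cs
  def numEdgesL : List (α × RTree α) → ℕ
    | [] => 0
    | (_, t) :: rest => 1 + numEdges t + numEdgesL rest
end

mutual
  /-- The list of (paths identifying the) edges of a rooted tree: an edge is
  identified by the list of child indices leading to it from the root. -/
  def edgePaths : RTree α → List (List ℕ)
    | .node cs => edgePathsL 0 cs
  def edgePathsL : ℕ → List (α × RTree α) → List (List ℕ)
    | _, [] => []
    | i, (_, t) :: rest =>
        ([i] :: (edgePaths t).map (List.cons i)) ++ edgePathsL (i+1) rest
end

/-- The label of the edge identified by a path, if any. -/
def labelAt : RTree α → List ℕ → Option α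
  | _, [] => none
  | .node cs, i :: p =>
      match cs[i]? with
      | none => none
      | some (a, t) => match p with
        | [] => some a
        | _ :: _ => labelAt t p

mutual
  /-- The Euler tour of a rooted tree, as the list of edges (given by their
  paths) traversed; each edge appears exactly twice. -/
  def eulerTour : RTree α → List (List ℕ)
    | .node cs => eulerTourL 0 cs
  def eulerTourL : ℕ → List (α × RTree α) → List (List ℕ)
    | _, [] => []
    | i, (_, t) :: rest =>
        ([i] :: ((eulerTour t).map (List.cons i) ++ [[i]])) ++ eulerTourL (i+1) rest
end

/-- The doubled Euler tour: the Euler tour traversed twice. -/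
def dblTour (Q : RTree α) : List (List ℕ) := eulerTour Q ++ eulerTour Q

/- Contraction of all edges whose (absolute) path fails the predicate `keep`. -/
mutual
  def contractT (keep : List ℕ → Bool) (pref : List ℕ) : RTree α → RTree α
    | .node cs => .node (contractL keep pref 0 cs)
  def contractL (keep : List ℕ → Bool) (pref : List ℕ) :
      ℕ → List (α × RTree α) → List (α × RTree α)
    | _, [] => []
    | i, (a, t) :: rest =>
        (if keep (pref ++ [i]) then
          [(a, contractT keep (pref ++ [i]) t)]
         else
          (match contractT keep (pref ++ [i]) t with | .node cs' => cs')) ++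
        contractL keep pref (i+1) rest
end

/-- Positions `i..j-1` (0-based) of the doubled Euler tour of `Q`. -/
def window (Q : RTree α) (i j : ℕ) : List (List ℕ) := ((dblTour Q).drop i).take (j - i)

/-- The segment `Q[i,j)`: the tree obtained from `Q` by contracting every edge that
occurs fewer than 2 times in positions `i..j-1` of the doubled Euler tour. -/
def segment (Q : RTree α) (i j : ℕ) : RTree α :=
  contractT (fun p => 2 ≤ (window Q i j).count p) [] Q

/-- A structure-respecting matching between the edges of `t₁` and `t₂`:
an injective partial map preserving the ancestor-descendant relation
(path prefix) and the left-to-right order of edges (lexicographic order). -/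
def IsMatching (t₁ t₂ : RTree α) (M : Finset (List ℕ × List ℕ)) : Prop :=
  (∀ pq ∈ M, pq.1 ∈ t₁.edgePaths ∧ pq.2 ∈ t₂.edgePaths) ∧
  (∀ pq ∈ M, ∀ pq' ∈ M,
    (pq.1 = pq'.1 ↔ pq.2 = pq'.2) ∧
    (pq.1 <+: pq'.1 ↔ pq.2 <+: pq'.2) ∧
    (List.Lex (· < ·) pq.1 pq'.1 ↔ List.Lex (· < ·) pq.2 pq'.2))

/-- Weight of a matching: `2` for each pair with equal labels, `1` otherwise. -/
def weight [DecidableEq α] (t₁ t₂ : RTree α) (M : Finset (List ℕ × List ℕ)) : ℕ :=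
  ∑ pq ∈ M, (if labelAt t₁ pq.1 = labelAt t₂ pq.2 then 2 else 1)

/-- Similarity: the maximum total weight of a structure-respecting matching. -/
noncomputable def simi [DecidableEq α] (t₁ t₂ : RTree α) : ℕ :=
  sSup {w | ∃ M, IsMatching t₁ t₂ M ∧ w = weight t₁ t₂ M}

end RTree

namespace RTree
variable {α : Type}

def shiftHead (k : ℕ) : List ℕ → List ℕ
  | [] => []
  | h :: t => (k + h) :: t

def nchild : RTree α → List (α × RTree α)
  | .node cs => cs

mutual
  def corrT (keep : List ℕ → Bool) (pref : List ℕ) : RTree α → List (List ℕ × List ℕ)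
    | .node cs => corrL keep pref 0 0 cs
  def corrL (keep : List ℕ → Bool) (pref : List ℕ) :
      ℕ → ℕ → List (α × RTree α) → List (List ℕ × List ℕ)
    | _, _, [] => []
    | i, k, (a, t) :: rest =>
        (if keep (pref ++ [i]) then
          ([i], [k]) :: (corrT keep (pref ++ [i]) t).map (fun rq => (i :: rq.1, k :: rq.2))
         else
          (corrT keep (pref ++ [i]) t).map (fun rq => (i :: rq.1, shiftHead k rq.2)))
        ++ corrL keep pref (i+1)
            (k + (if keep (pref ++ [i]) then 1
                  else (nchild (contractT keep (pref ++ [i]) t)).length)) rest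
end

theorem edgePathsL_shift (i : ℕ) (cs : List (α × RTree α)) : ∀ j,
    edgePathsL (i + j) cs = (edgePathsL j cs).map (shiftHead i) := by
  induction cs with
  | nil => intro j; simp [edgePathsL]
  | cons c rest ih =>
    intro j
    obtain ⟨a, t⟩ := c
    have h1 : i + j + 1 = i + (j + 1) := by omega
    simp only [edgePathsL, h1, ih (j+1), List.map_append, List.map_cons, List.map_map]
    have h2 : shiftHead i ∘ List.cons j = List.cons (i + j) := by funext p; simp [shiftHead]
    simp [h2, shiftHead]

theorem edgePathsL_append (cs ds : List (α × RTree α)) : ∀ i,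
    edgePathsL i (cs ++ ds) = edgePathsL i cs ++ edgePathsL (i + cs.length) ds := by
  induction cs with
  | nil => intro i; simp [edgePathsL]
  | cons c rest ih =>
    intro i
    obtain ⟨a, t⟩ := c
    have h1 : i + (rest.length + 1) = i + 1 + rest.length := by omega
    simp only [List.cons_append, edgePathsL, List.append_eq, ih (i+1), List.length_cons, h1,
      List.append_assoc]

end RTree

namespace RTree
variable {α : Type}

@[simp] theorem nchild_node (cs : List (α × RTree α)) : nchild (RTree.node cs) = cs := rfl

mutual
theorem corrT_fst (keep : List ℕ → Bool) (pref : List ℕ) (t : RTree α) :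
    (corrT keep pref t).map Prod.fst = (edgePaths t).filter (fun r => keep (pref ++ r)) := by
  match t with
  | .node cs =>
    rw [corrT, edgePaths]
    exact corrL_fst keep pref 0 0 cs

theorem corrL_fst (keep : List ℕ → Bool) (pref : List ℕ) (i k : ℕ) (cs : List (α × RTree α)) :
    (corrL keep pref i k cs).map Prod.fst
      = (edgePathsL i cs).filter (fun r => keep (pref ++ r)) := by
  match cs with
  | [] => simp [corrL, edgePathsL]
  | (a, t) :: rest =>
    have hsub := corrT_fst keep (pref ++ [i]) t
    have hrest := corrL_fst keep pref (i+1)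
      (k + (if keep (pref ++ [i]) then 1
        else (nchild (contractT keep (pref ++ [i]) t)).length)) rest
    have hc1 : (fun r => keep (pref ++ r)) ∘ List.cons i
        = fun r => keep ((pref ++ [i]) ++ r) := by
      funext r; simp
    have e1 : (List.map (fun rq : List ℕ × List ℕ => (i :: rq.1, k :: rq.2))
          (corrT keep (pref ++ [i]) t)).map Prod.fst
        = List.map (List.cons i)
            ((edgePaths t).filter (fun r => keep ((pref ++ [i]) ++ r))) := by
      rw [List.map_map, show (Prod.fst ∘ fun rq : List ℕ × List ℕ => (i :: rq.1, k :: rq.2))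
        = List.cons i ∘ Prod.fst from rfl, ← List.map_map, hsub]
    have e2 : (List.map (fun rq : List ℕ × List ℕ => (i :: rq.1, shiftHead k rq.2))
          (corrT keep (pref ++ [i]) t)).map Prod.fst
        = List.map (List.cons i)
            ((edgePaths t).filter (fun r => keep ((pref ++ [i]) ++ r))) := by
      rw [List.map_map, show (Prod.fst ∘ fun rq : List ℕ × List ℕ => (i :: rq.1, shiftHead k rq.2))
        = List.cons i ∘ Prod.fst from rfl, ← List.map_map, hsub]
    by_cases hk : keep (pref ++ [i])
    · rw [if_pos hk] at hrest
      simp only [corrL, edgePathsL, if_pos hk, List.map_append, List.map_cons, e1,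
        List.filter_append, List.filter_cons, hk, if_true, ite_true, List.filter_map, hc1,
        hrest, List.cons_append, List.nil_append]
    · rw [if_neg hk] at hrest
      simp only [corrL, edgePathsL, if_neg hk, List.map_append, e2,
        List.filter_append, List.filter_cons, List.filter_map, hc1, hrest,
        List.cons_append, List.nil_append]
end

mutual
theorem corrT_snd (keep : List ℕ → Bool) (pref : List ℕ) (t : RTree α) :
    (corrT keep pref t).map Prod.snd = edgePaths (contractT keep pref t) := by
  match t with
  | .node cs =>
    rw [corrT, contractT, edgePaths]
    exact corrL_snd keep pref 0 0 cs

theorem corrL_snd (keep : List ℕ → Bool) (pref : List ℕ) (i k : ℕ) (cs : List (α × RTree α)) :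
    (corrL keep pref i k cs).map Prod.snd = edgePathsL k (contractL keep pref i cs) := by
  match cs with
  | [] => simp [corrL, contractL, edgePathsL]
  | (a, t) :: rest =>
    have hsub := corrT_snd keep (pref ++ [i]) t
    by_cases hk : keep (pref ++ [i])
    · have hrest := corrL_snd keep pref (i+1) (k + 1) rest
      have e1 : (List.map (fun rq : List ℕ × List ℕ => (i :: rq.1, k :: rq.2))
            (corrT keep (pref ++ [i]) t)).map Prod.snd
          = List.map (List.cons k) (edgePaths (contractT keep (pref ++ [i]) t)) := by
        rw [List.map_map, show (Prod.snd ∘ fun rq : List ℕ × List ℕ => (i :: rq.1, k :: rq.2))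
          = List.cons k ∘ Prod.snd from rfl, ← List.map_map, hsub]
      simp only [corrL, contractL, if_pos hk, List.map_append, List.map_cons, e1,
        List.singleton_append, edgePathsL, hrest, List.cons_append, List.nil_append]
    · cases hT : contractT keep (pref ++ [i]) t with
      | node cs' =>
      have hrest := corrL_snd keep pref (i+1) (k + cs'.length) rest
      have e2 : (List.map (fun rq : List ℕ × List ℕ => (i :: rq.1, shiftHead k rq.2))
            (corrT keep (pref ++ [i]) t)).map Prod.snd
          = List.map (shiftHead k) (edgePathsL 0 cs') := by
        rw [List.map_map, show (Prod.snd ∘ fun rq : List ℕ × List ℕ =>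
            (i :: rq.1, shiftHead k rq.2))
          = shiftHead k ∘ Prod.snd from rfl, ← List.map_map, hsub, hT, edgePaths]
      have hn : (nchild (contractT keep (pref ++ [i]) t)).length = cs'.length := by
        rw [hT]; rfl
      have hshift := edgePathsL_shift k cs' 0
      rw [show k + 0 = k by omega] at hshift
      simp only [corrL, contractL, if_neg hk, List.map_append, e2, hT, hn, hrest,
        edgePathsL_append, hshift, nchild_node]
end

end RTree

namespace RTree
variable {α : Type}

theorem lex_cc {a b : ℕ} {l l' : List ℕ} :
    List.Lex (· < ·) (a :: l) (b :: l') ↔ a < b ∨ (a = b ∧ List.Lex (· < ·) l l') := by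
  constructor
  · intro h
    cases h with
    | cons h => exact Or.inr ⟨rfl, h⟩
    | rel h => exact Or.inl h
  · rintro (h | ⟨rfl, h⟩)
    · exact List.Lex.rel h
    · exact List.Lex.cons h

theorem not_lex_self (l : List ℕ) : ¬ List.Lex (· < ·) l l := by
  induction l with
  | nil => exact List.not_lex_nil
  | cons a l ih => rw [lex_cc]; rintro (h | ⟨-, h⟩); omega; exact ih h

/-- The three order-compatibility conditions for a pair of pairs. -/
def GoodPair (e e' : List ℕ × List ℕ) : Prop :=
  (e.1 = e'.1 ↔ e.2 = e'.2) ∧ (e.1 <+: e'.1 ↔ e.2 <+: e'.2) ∧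
    (List.Lex (· < ·) e.1 e'.1 ↔ List.Lex (· < ·) e.2 e'.2)

def Good (c : List (List ℕ × List ℕ)) : Prop := ∀ e ∈ c, ∀ e' ∈ c, GoodPair e e'

theorem goodPair_of_heads_lt {h h' h2 h2' : ℕ} {rt qt rt2 qt2 : List ℕ}
    (H1 : h < h2) (H2 : h' < h2') :
    GoodPair (h :: rt, h' :: qt) (h2 :: rt2, h2' :: qt2) := by
  refine ⟨?_, ?_, ?_⟩ <;> simp only [List.cons.injEq, List.cons_prefix_cons, lex_cc]
  · constructor <;> rintro ⟨h, -⟩ <;> omega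
  · constructor <;> rintro ⟨h, -⟩ <;> omega
  · constructor <;> intro <;> exact Or.inl (by omega)

theorem goodPair_of_heads_gt {h h' h2 h2' : ℕ} {rt qt rt2 qt2 : List ℕ}
    (H1 : h2 < h) (H2 : h2' < h') :
    GoodPair (h :: rt, h' :: qt) (h2 :: rt2, h2' :: qt2) := by
  refine ⟨?_, ?_, ?_⟩ <;> simp only [List.cons.injEq, List.cons_prefix_cons, lex_cc]
  · constructor <;> rintro ⟨h, -⟩ <;> omega
  · constructor <;> rintro ⟨h, -⟩ <;> omega
  · constructor <;> rintro (h | ⟨h, -⟩) <;> omega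

mutual
theorem corrT_heads (keep : List ℕ → Bool) (pref : List ℕ) (t : RTree α) :
    ∀ e ∈ corrT keep pref t, ∃ h rt h' qt, e = (h :: rt, h' :: qt) ∧
      h < (nchild t).length ∧ h' < (nchild (contractT keep pref t)).length := by
  match t with
  | .node cs =>
    intro e he
    rw [corrT] at he
    obtain ⟨h, rt, h', qt, rfl, _, h2, _, h4⟩ := corrL_heads keep pref 0 0 cs e he
    exact ⟨h, rt, h', qt, rfl, by simpa using h2, by
      rw [contractT]; simpa using h4⟩

theorem corrL_heads (keep : List ℕ → Bool) (pref : List ℕ) (i k : ℕ)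
    (cs : List (α × RTree α)) :
    ∀ e ∈ corrL keep pref i k cs, ∃ h rt h' qt, e = (h :: rt, h' :: qt) ∧
      i ≤ h ∧ h < i + cs.length ∧ k ≤ h' ∧ h' < k + (contractL keep pref i cs).length := by
  match cs with
  | [] => intro e he; simp [corrL] at he
  | (a, t) :: rest =>
    intro e he
    by_cases hk : keep (pref ++ [i])
    · have hlen : (contractL keep pref i ((a, t) :: rest)).length
          = 1 + (contractL keep pref (i+1) rest).length := by
        simp [contractL, if_pos hk] <;> omega
      rw [corrL, if_pos hk] at he
      simp only [if_pos hk, List.cons_append, List.mem_cons, List.mem_append,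
        List.mem_map] at he
      rcases he with rfl | ⟨⟨r, q⟩, hrq, rfl⟩ | he
      · exact ⟨i, [], k, [], rfl, le_refl i, by simp, le_refl k, by omega⟩
      · exact ⟨i, r, k, q, rfl, le_refl i, by simp, le_refl k, by omega⟩
      · obtain ⟨h, rt, h', qt, rfl, hb1, hb2, hb3, hb4⟩ :=
          corrL_heads keep pref (i+1) (k+1) rest e he
        exact ⟨h, rt, h', qt, rfl, by omega, by simp at hb2 ⊢; omega, by omega, by omega⟩
    · cases hT : contractT keep (pref ++ [i]) t with
      | node cs' =>
      have hlen : (contractL keep pref i ((a, t) :: rest)).length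
          = cs'.length + (contractL keep pref (i+1) rest).length := by
        simp [contractL, if_neg hk, hT] <;> omega
      rw [corrL, if_neg hk] at he
      simp only [if_neg hk, hT, nchild_node, List.mem_append, List.mem_map] at he
      rcases he with ⟨⟨r, q⟩, hrq, rfl⟩ | he
      · obtain ⟨_, _, q0, qt, heq, -, hq0⟩ := corrT_heads keep (pref ++ [i]) t (r, q) hrq
        rw [hT, nchild_node] at hq0
        obtain ⟨rfl, rfl⟩ : r = _ ∧ q = _ := by
          exact ⟨congrArg Prod.fst heq, congrArg Prod.snd heq⟩
        refine ⟨i, _, k + q0, qt, rfl, le_refl i, by simp, by omega, by omega⟩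
      · obtain ⟨h, rt, h', qt, rfl, hb1, hb2, hb3, hb4⟩ :=
          corrL_heads keep pref (i+1) (k + cs'.length) rest e he
        exact ⟨h, rt, h', qt, rfl, by omega, by simp at hb2 ⊢; omega, by omega, by omega⟩
end

end RTree

namespace RTree
variable {α : Type}

mutual
theorem corrT_good (keep : List ℕ → Bool) (pref : List ℕ) (t : RTree α) :
    Good (corrT keep pref t) := by
  match t with
  | .node cs =>
    rw [corrT]
    exact corrL_good keep pref 0 0 cs

theorem corrL_good (keep : List ℕ → Bool) (pref : List ℕ) (i k : ℕ)
    (cs : List (α × RTree α)) :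
    Good (corrL keep pref i k cs) := by
  match cs with
  | [] => intro e he; rw [corrL] at he; simp at he
  | (a, t) :: rest =>
    have hsubgood := corrT_good keep (pref ++ [i]) t
    have hsubheads := corrT_heads keep (pref ++ [i]) t
    by_cases hk : keep (pref ++ [i])
    · have hrestgood := corrL_good keep pref (i+1) (k+1) rest
      have hrestheads := corrL_heads keep pref (i+1) (k+1) rest
      intro e he e' he'
      rw [corrL, if_pos hk] at he he'
      rw [if_pos hk] at he he'
      simp only [List.cons_append, List.mem_cons, List.mem_append, List.mem_map] at he he'
      rcases he with rfl | ⟨⟨r, q⟩, hrq, rfl⟩ | he <;>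
        rcases he' with rfl | ⟨⟨r', q'⟩, hrq', rfl⟩ | he'
      · exact ⟨by simp, by simp, iff_of_false (not_lex_self _) (not_lex_self _)⟩
      · obtain ⟨r0, rt, q0, qt, heq, -, -⟩ := hsubheads _ hrq'
        obtain ⟨rfl, rfl⟩ : r' = r0 :: rt ∧ q' = q0 :: qt :=
          ⟨congrArg Prod.fst heq, congrArg Prod.snd heq⟩
        refine ⟨iff_of_false (by simp) (by simp), iff_of_true ?_ ?_, iff_of_true ?_ ?_⟩
        · exact List.cons_prefix_cons.mpr ⟨rfl, List.nil_prefix⟩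
        · exact List.cons_prefix_cons.mpr ⟨rfl, List.nil_prefix⟩
        · exact lex_cc.mpr (Or.inr ⟨rfl, List.Lex.nil⟩)
        · exact lex_cc.mpr (Or.inr ⟨rfl, List.Lex.nil⟩)
      · obtain ⟨h2, rt2, h2', qt2, heq, hb1, -, hb3, -⟩ := hrestheads _ he'
        subst heq
        exact goodPair_of_heads_lt (by omega) (by omega)
      · obtain ⟨r0, rt, q0, qt, heq, -, -⟩ := hsubheads _ hrq
        obtain ⟨rfl, rfl⟩ : r = r0 :: rt ∧ q = q0 :: qt :=
          ⟨congrArg Prod.fst heq, congrArg Prod.snd heq⟩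
        refine ⟨iff_of_false (by simp) (by simp), iff_of_false ?_ ?_, iff_of_false ?_ ?_⟩
        · rw [List.cons_prefix_cons]; rintro ⟨-, h⟩; simp at h
        · rw [List.cons_prefix_cons]; rintro ⟨-, h⟩; simp at h
        · rw [lex_cc]; rintro (h | ⟨-, h⟩); · omega
          · exact List.not_lex_nil h
        · rw [lex_cc]; rintro (h | ⟨-, h⟩); · omega
          · exact List.not_lex_nil h
      · obtain ⟨g1, g2, g3⟩ := hsubgood _ hrq _ hrq'
        refine ⟨?_, ?_, ?_⟩
        · simpa using g1
        · simpa [List.cons_prefix_cons] using g2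
        · simpa [lex_cc, not_lex_self] using g3
      · obtain ⟨h2, rt2, h2', qt2, heq, hb1, -, hb3, -⟩ := hrestheads _ he'
        subst heq
        exact goodPair_of_heads_lt (by omega) (by omega)
      · obtain ⟨h2, rt2, h2', qt2, heq, hb1, -, hb3, -⟩ := hrestheads _ he
        subst heq
        exact goodPair_of_heads_gt (by omega) (by omega)
      · obtain ⟨h2, rt2, h2', qt2, heq, hb1, -, hb3, -⟩ := hrestheads _ he
        subst heq
        exact goodPair_of_heads_gt (by omega) (by omega)
      · exact hrestgood _ he _ he'
    · cases hT : contractT keep (pref ++ [i]) t with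
      | node cs' =>
      have hrestgood := corrL_good keep pref (i+1) (k + cs'.length) rest
      have hrestheads := corrL_heads keep pref (i+1) (k + cs'.length) rest
      intro e he e' he'
      rw [corrL, if_neg hk] at he he'
      rw [if_neg hk, hT, nchild_node] at he he'
      simp only [List.mem_append, List.mem_map] at he he'
      rcases he with ⟨⟨r, q⟩, hrq, rfl⟩ | he <;>
        rcases he' with ⟨⟨r', q'⟩, hrq', rfl⟩ | he'
      · obtain ⟨r0, rt, q0, qt, heq, -, hq0⟩ := hsubheads _ hrq
        rw [hT, nchild_node] at hq0
        obtain ⟨rfl, rfl⟩ : r = r0 :: rt ∧ q = q0 :: qt :=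
          ⟨congrArg Prod.fst heq, congrArg Prod.snd heq⟩
        obtain ⟨r0', rt', q0', qt', heq', -, hq0'⟩ := hsubheads _ hrq'
        rw [hT, nchild_node] at hq0'
        obtain ⟨rfl, rfl⟩ : r' = r0' :: rt' ∧ q' = q0' :: qt' :=
          ⟨congrArg Prod.fst heq', congrArg Prod.snd heq'⟩
        obtain ⟨g1, g2, g3⟩ := hsubgood _ hrq _ hrq'
        simp only [List.cons.injEq, List.cons_prefix_cons, lex_cc] at g1 g2 g3
        refine ⟨?_, ?_, ?_⟩ <;>
          simp only [shiftHead, List.cons.injEq, List.cons_prefix_cons, lex_cc, true_and,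
            lt_self_iff_false, false_or]
        · rw [g1]; constructor <;> rintro ⟨h1, h2⟩ <;> exact ⟨by omega, h2⟩
        · rw [g2]; constructor <;> rintro ⟨h1, h2⟩ <;> exact ⟨by omega, h2⟩
        · rw [g3]; constructor <;> rintro (h | ⟨h1, h2⟩)
          · exact Or.inl (by omega)
          · exact Or.inr ⟨by omega, h2⟩
          · exact Or.inl (by omega)
          · exact Or.inr ⟨by omega, h2⟩
      · obtain ⟨r0, rt, q0, qt, heq, -, hq0⟩ := hsubheads _ hrq
        rw [hT, nchild_node] at hq0
        obtain ⟨rfl, rfl⟩ : r = r0 :: rt ∧ q = q0 :: qt :=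
          ⟨congrArg Prod.fst heq, congrArg Prod.snd heq⟩
        obtain ⟨h2, rt2, h2', qt2, heq, hb1, -, hb3, -⟩ := hrestheads _ he'
        subst heq
        exact goodPair_of_heads_lt (by omega) (by omega)
      · obtain ⟨r0, rt, q0, qt, heq, -, hq0⟩ := hsubheads _ hrq'
        rw [hT, nchild_node] at hq0
        obtain ⟨rfl, rfl⟩ : r' = r0 :: rt ∧ q' = q0 :: qt :=
          ⟨congrArg Prod.fst heq, congrArg Prod.snd heq⟩
        obtain ⟨h2, rt2, h2', qt2, heq, hb1, -, hb3, -⟩ := hrestheads _ he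
        subst heq
        exact goodPair_of_heads_gt (by omega) (by omega)
      · exact hrestgood _ he _ he'
end

end RTree

namespace RTree
variable {α : Type}

theorem labelAt_cons (c : α × RTree α) (cs : List (α × RTree α)) (n : ℕ) (p : List ℕ) :
    labelAt (RTree.node (c :: cs)) ((n+1) :: p) = labelAt (RTree.node cs) (n :: p) := by
  simp only [labelAt, List.getElem?_cons_succ]

theorem labelAt_zero_nil (a : α) (t : RTree α) (cs : List (α × RTree α)) :
    labelAt (RTree.node ((a, t) :: cs)) [0] = some a := by
  simp only [labelAt, List.getElem?_cons_zero]

theorem labelAt_zero_cons (a : α) (t : RTree α) (cs : List (α × RTree α)) (p0 : ℕ)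
    (p : List ℕ) :
    labelAt (RTree.node ((a, t) :: cs)) (0 :: p0 :: p) = labelAt t (p0 :: p) := by
  simp only [labelAt, List.getElem?_cons_zero]

theorem labelAt_append_left {n : ℕ} {cs : List (α × RTree α)} (ds : List (α × RTree α))
    (h : n < cs.length) (p : List ℕ) :
    labelAt (RTree.node (cs ++ ds)) (n :: p) = labelAt (RTree.node cs) (n :: p) := by
  simp only [labelAt, List.getElem?_append_left h]

theorem labelAt_append_right {n : ℕ} {cs : List (α × RTree α)} (ds : List (α × RTree α))
    (h : cs.length ≤ n) (p : List ℕ) :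
    labelAt (RTree.node (cs ++ ds)) (n :: p) = labelAt (RTree.node ds) ((n - cs.length) :: p) := by
  simp only [labelAt, List.getElem?_append_right h]

mutual
theorem corrT_label (keep : List ℕ → Bool) (pref : List ℕ) (t : RTree α) :
    ∀ e ∈ corrT keep pref t, labelAt t e.1 = labelAt (contractT keep pref t) e.2 := by
  match t with
  | .node cs =>
    intro e he
    rw [corrT] at he
    obtain ⟨h, rt, h', qt, heq, -, -, -, -⟩ := corrL_heads keep pref 0 0 cs e he
    have := corrL_label keep pref 0 0 cs e he h rt h' qt heq
    rw [heq, contractT]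
    simpa using this

theorem corrL_label (keep : List ℕ → Bool) (pref : List ℕ) (i k : ℕ)
    (cs : List (α × RTree α)) :
    ∀ e ∈ corrL keep pref i k cs, ∀ h rt h' qt, e = (h :: rt, h' :: qt) →
      labelAt (RTree.node cs) ((h - i) :: rt)
        = labelAt (RTree.node (contractL keep pref i cs)) ((h' - k) :: qt) := by
  match cs with
  | [] => intro e he; rw [corrL] at he; simp at he
  | (a, t) :: rest =>
    intro e he h rt h' qt heq
    have hsubheads := corrT_heads keep (pref ++ [i]) t
    by_cases hk : keep (pref ++ [i])
    · rw [corrL, if_pos hk] at he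
      rw [if_pos hk] at he
      rw [contractL, if_pos hk]
      simp only [List.cons_append, List.mem_cons, List.mem_append, List.mem_map] at he
      rcases he with rfl | ⟨⟨r, q⟩, hrq, heq2⟩ | he
      · obtain ⟨rfl, rfl, rfl, rfl⟩ : i = h ∧ [] = rt ∧ k = h' ∧ [] = qt := by
          rw [Prod.mk.injEq, List.cons.injEq, List.cons.injEq] at heq
          exact ⟨heq.1.1, heq.1.2, heq.2.1, heq.2.2⟩
        simp only [Nat.sub_self, List.singleton_append, labelAt_zero_nil]
      · obtain ⟨r0, rt0, q0, qt0, heq3, -, -⟩ := hsubheads _ hrq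
        obtain ⟨rfl, rfl⟩ : r = r0 :: rt0 ∧ q = q0 :: qt0 :=
          ⟨congrArg Prod.fst heq3, congrArg Prod.snd heq3⟩
        rw [heq] at heq2
        obtain ⟨rfl, rfl, rfl, rfl⟩ : i = h ∧ r0 :: rt0 = rt ∧ k = h' ∧ q0 :: qt0 = qt := by
          rw [Prod.mk.injEq, List.cons.injEq, List.cons.injEq] at heq2
          exact ⟨heq2.1.1, heq2.1.2, heq2.2.1, heq2.2.2⟩
        simp only [Nat.sub_self, List.singleton_append, labelAt_zero_cons]
        exact corrT_label keep (pref ++ [i]) t _ hrq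
      · subst heq
        obtain ⟨h0, rt0, h0', qt0, heq3, hb1, -, hb3, -⟩ :=
          corrL_heads keep pref (i+1) (k+1) rest _ he
        obtain ⟨rfl, rfl, rfl, rfl⟩ : h = h0 ∧ rt = rt0 ∧ h' = h0' ∧ qt = qt0 := by
          rw [Prod.mk.injEq, List.cons.injEq, List.cons.injEq] at heq3
          exact ⟨heq3.1.1, heq3.1.2, heq3.2.1, heq3.2.2⟩
        have := corrL_label keep pref (i+1) (k+1) rest _ he h rt h' qt rfl
        rw [show h - i = (h - (i+1)) + 1 by omega, show h' - k = (h' - (k+1)) + 1 by omega,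
          List.singleton_append, labelAt_cons, labelAt_cons]
        exact this
    · cases hT : contractT keep (pref ++ [i]) t with
      | node cs' =>
      rw [corrL, if_neg hk] at he
      rw [if_neg hk, hT, nchild_node] at he
      simp only [contractL, if_neg hk, hT]
      simp only [List.mem_append, List.mem_map] at he
      rcases he with ⟨⟨r, q⟩, hrq, heq2⟩ | he
      · obtain ⟨r0, rt0, q0, qt0, heq3, -, hq0⟩ := hsubheads _ hrq
        rw [hT, nchild_node] at hq0
        obtain ⟨rfl, rfl⟩ : r = r0 :: rt0 ∧ q = q0 :: qt0 :=
          ⟨congrArg Prod.fst heq3, congrArg Prod.snd heq3⟩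
        rw [heq] at heq2
        obtain ⟨rfl, rfl, rfl, rfl⟩ : i = h ∧ r0 :: rt0 = rt ∧ k + q0 = h' ∧ qt0 = qt := by
          rw [Prod.mk.injEq, List.cons.injEq] at heq2
          have h2 := heq2.2
          rw [shiftHead, List.cons.injEq] at h2
          exact ⟨heq2.1.1, heq2.1.2, h2.1, h2.2⟩
        rw [Nat.sub_self, show k + q0 - k = q0 by omega, labelAt_zero_cons,
          labelAt_append_left _ hq0]
        have := corrT_label keep (pref ++ [i]) t _ hrq
        rw [hT] at this
        exact this
      · subst heq
        obtain ⟨h0, rt0, h0', qt0, heq3, hb1, -, hb3, -⟩ :=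
          corrL_heads keep pref (i+1) (k + cs'.length) rest _ he
        obtain ⟨rfl, rfl, rfl, rfl⟩ : h = h0 ∧ rt = rt0 ∧ h' = h0' ∧ qt = qt0 := by
          rw [Prod.mk.injEq, List.cons.injEq, List.cons.injEq] at heq3
          exact ⟨heq3.1.1, heq3.1.2, heq3.2.1, heq3.2.2⟩
        have := corrL_label keep pref (i+1) (k + cs'.length) rest _ he h rt h' qt rfl
        rw [show h - i = (h - (i+1)) + 1 by omega, labelAt_cons,
          labelAt_append_right _ (by omega),
          show h' - k - cs'.length = h' - (k + cs'.length) by omega]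
        exact this
end

end RTree

namespace RTree
variable {α : Type}

open Classical in
noncomputable def pullr (c : List (List ℕ × List ℕ)) (q : List ℕ) : List ℕ :=
  if h : ∃ r, (r, q) ∈ c then h.choose else []

theorem pullr_spec {c : List (List ℕ × List ℕ)} {q : List ℕ} (h : ∃ r, (r, q) ∈ c) :
    (pullr c q, q) ∈ c := by
  rw [pullr, dif_pos h]; exact h.choose_spec

open Classical in
noncomputable def pushr (c : List (List ℕ × List ℕ)) (r : List ℕ) : List ℕ :=
  if h : ∃ q, (r, q) ∈ c then h.choose else []

theorem pushr_spec {c : List (List ℕ × List ℕ)} {r : List ℕ} (h : ∃ q, (r, q) ∈ c) :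
    (r, pushr c r) ∈ c := by
  rw [pushr, dif_pos h]; exact h.choose_spec

theorem corr_mem_fst {keep : List ℕ → Bool} {Q : RTree α} {e : List ℕ × List ℕ}
    (h : e ∈ corrT keep [] Q) : e.1 ∈ edgePaths Q ∧ keep e.1 = true := by
  have h2 : e.1 ∈ (corrT keep [] Q).map Prod.fst := List.mem_map_of_mem h
  rw [corrT_fst] at h2
  simpa using List.mem_filter.mp h2

theorem corr_mem_snd {keep : List ℕ → Bool} {Q : RTree α} {e : List ℕ × List ℕ}
    (h : e ∈ corrT keep [] Q) : e.2 ∈ edgePaths (contractT keep [] Q) := by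
  have h2 : e.2 ∈ (corrT keep [] Q).map Prod.snd := List.mem_map_of_mem h
  rwa [corrT_snd] at h2

theorem corr_pull_ex {keep : List ℕ → Bool} {Q : RTree α} {q : List ℕ}
    (h : q ∈ edgePaths (contractT keep [] Q)) : ∃ r, (r, q) ∈ corrT keep [] Q := by
  rw [← corrT_snd] at h
  obtain ⟨⟨r, q'⟩, he, rfl⟩ := List.mem_map.mp h
  exact ⟨r, he⟩

theorem corr_push_ex {keep : List ℕ → Bool} {Q : RTree α} {r : List ℕ}
    (h1 : r ∈ edgePaths Q) (h2 : keep r = true) : ∃ q, (r, q) ∈ corrT keep [] Q := by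
  have h : r ∈ (corrT keep [] Q).map Prod.fst := by
    rw [corrT_fst]
    exact List.mem_filter.mpr ⟨h1, by simpa using h2⟩
  obtain ⟨⟨r', q⟩, he, rfl⟩ := List.mem_map.mp h
  exact ⟨q, he⟩

section Simi
variable [DecidableEq α]

theorem isMatching_empty (t₁ t₂ : RTree α) : IsMatching t₁ t₂ ∅ := by
  constructor <;> intro pq hpq <;> simp at hpq

theorem simiSet_nonempty (t₁ t₂ : RTree α) :
    Set.Nonempty {w | ∃ M, IsMatching t₁ t₂ M ∧ w = weight t₁ t₂ M} :=
  ⟨weight t₁ t₂ ∅, ∅, isMatching_empty t₁ t₂, rfl⟩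

theorem weight_bound (t₁ t₂ : RTree α) (M : Finset (List ℕ × List ℕ))
    (hM : IsMatching t₁ t₂ M) :
    weight t₁ t₂ M ≤ 2 * (t₁.edgePaths.toFinset ×ˢ t₂.edgePaths.toFinset).card := by
  have hsub : M ⊆ t₁.edgePaths.toFinset ×ˢ t₂.edgePaths.toFinset := by
    intro pq hpq
    rcases hM.1 pq hpq with ⟨h1, h2⟩
    rw [Finset.mem_product]
    simp only [List.mem_toFinset]
    exact ⟨h1, h2⟩
  calc weight t₁ t₂ M ≤ ∑ _pq ∈ M, 2 :=
        Finset.sum_le_sum (by intro pq _; split <;> omega)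
    _ = 2 * M.card := by rw [Finset.sum_const, smul_eq_mul, mul_comm]
    _ ≤ _ := by
        have := Finset.card_le_card hsub
        omega

theorem simiSet_bddAbove (t₁ t₂ : RTree α) :
    BddAbove {w | ∃ M, IsMatching t₁ t₂ M ∧ w = weight t₁ t₂ M} := by
  refine ⟨2 * (t₁.edgePaths.toFinset ×ˢ t₂.edgePaths.toFinset).card, ?_⟩
  rintro w ⟨M, hM, rfl⟩
  exact weight_bound t₁ t₂ M hM

theorem weight_le_simi {t₁ t₂ : RTree α} {M : Finset (List ℕ × List ℕ)}
    (hM : IsMatching t₁ t₂ M) : weight t₁ t₂ M ≤ simi t₁ t₂ :=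
  le_csSup (simiSet_bddAbove t₁ t₂) ⟨M, hM, rfl⟩

theorem simi_le {t₁ t₂ : RTree α} {c : ℕ}
    (h : ∀ M, IsMatching t₁ t₂ M → weight t₁ t₂ M ≤ c) : simi t₁ t₂ ≤ c :=
  csSup_le (simiSet_nonempty t₁ t₂) (by rintro w ⟨M, hM, rfl⟩; exact h M hM)

theorem simi_contract_le (T Q : RTree α) (keep keep' : List ℕ → Bool) (x : List ℕ)
    (hmono : ∀ p, keep p = true → keep' p = true)
    (hx : ∀ p, p ≠ x → keep' p = keep p) :
    simi T (contractT keep' [] Q) ≤ simi T (contractT keep [] Q) + 2 := by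
  classical
  apply simi_le
  intro M hM
  set C := contractT keep [] Q with hC
  set C' := contractT keep' [] Q with hC'
  set corr := corrT keep [] Q with hcorr
  set corr' := corrT keep' [] Q with hcorr'
  -- basic facts about elements of M
  have hMr : ∀ pq ∈ M, (pullr corr' pq.2, pq.2) ∈ corr' := by
    intro pq hpq
    exact pullr_spec (corr_pull_ex ((hM.1 pq hpq).2))
  -- split off the (at most one) bad pair
  set Mb := M.filter (fun pq => pullr corr' pq.2 = x) with hMb
  set Mg := M.filter (fun pq => ¬(pullr corr' pq.2 = x)) with hMg
  have hsplit : weight T C' M = weight T C' Mb + weight T C' Mg := by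
    rw [weight, weight, weight, hMb, hMg]
    exact (Finset.sum_filter_add_sum_filter_not M _ _).symm
  have hMbcard : Mb.card ≤ 1 := by
    rw [Finset.card_le_one]
    intro pq hpq pq' hpq'
    rw [hMb, Finset.mem_filter] at hpq hpq'
    have h1 := hMr pq hpq.1
    have h2 := hMr pq' hpq'.1
    rw [hpq.2] at h1
    rw [hpq'.2] at h2
    have hgood := corrT_good keep' [] Q _ h1 _ h2
    have hsnd : pq.2 = pq'.2 := hgood.1.mp rfl
    have hfst : pq.1 = pq'.1 := ((hM.2 pq hpq.1 pq' hpq'.1).1).mpr hsnd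
    exact Prod.ext hfst hsnd
  have hMbw : weight T C' Mb ≤ 2 := by
    calc weight T C' Mb ≤ ∑ _pq ∈ Mb, 2 :=
          Finset.sum_le_sum (by intro pq _; split <;> omega)
      _ = 2 * Mb.card := by rw [Finset.sum_const, smul_eq_mul, mul_comm]
      _ ≤ 2 := by omega
  -- the pushed-forward matching
  have hMgkey : ∀ pq ∈ Mg, (pullr corr' pq.2, pq.2) ∈ corr' ∧
      (pullr corr' pq.2, pushr corr (pullr corr' pq.2)) ∈ corr := by
    intro pq hpq
    rw [hMg, Finset.mem_filter] at hpq
    have h1 := hMr pq hpq.1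
    have h2 := corr_mem_fst h1
    have hkeep : keep (pullr corr' pq.2) = true := by
      rw [← hx _ hpq.2]
      exact h2.2
    exact ⟨h1, pushr_spec (corr_push_ex h2.1 hkeep)⟩
  set f : List ℕ × List ℕ → List ℕ × List ℕ :=
    fun pq => (pq.1, pushr corr (pullr corr' pq.2)) with hf
  set M' := Mg.image f with hM'
  have hMgM : Mg ⊆ M := Finset.filter_subset _ _
  -- injectivity of f on Mg
  have hinj : ∀ pq ∈ Mg, ∀ pq' ∈ Mg, f pq = f pq' → pq = pq' := by
    intro pq hpq pq' hpq' hfe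
    obtain ⟨c1, c2⟩ := hMgkey pq hpq
    obtain ⟨c1', c2'⟩ := hMgkey pq' hpq'
    have hg := corrT_good keep [] Q _ c2 _ c2'
    have hg' := corrT_good keep' [] Q _ c1 _ c1'
    rw [hf] at hfe
    simp only [Prod.mk.injEq] at hfe
    obtain ⟨hfe1, hfe2⟩ := hfe
    have hr : pullr corr' pq.2 = pullr corr' pq'.2 := hg.1.mpr hfe2
    have hsnd : pq.2 = pq'.2 := hg'.1.mp hr
    exact Prod.ext hfe1 hsnd
  -- M' is a matching
  have hM'match : IsMatching T C M' := by
    constructor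
    · intro u hu
      obtain ⟨pq, hpq, rfl⟩ := Finset.mem_image.mp hu
      obtain ⟨c1, c2⟩ := hMgkey pq hpq
      simp only [hf]
      exact ⟨(hM.1 pq (hMgM hpq)).1, corr_mem_snd c2⟩
    · intro u hu u' hu'
      obtain ⟨pq, hpq, rfl⟩ := Finset.mem_image.mp hu
      obtain ⟨pq', hpq', rfl⟩ := Finset.mem_image.mp hu'
      obtain ⟨c1, c2⟩ := hMgkey pq hpq
      obtain ⟨c1', c2'⟩ := hMgkey pq' hpq'
      have hg := corrT_good keep [] Q _ c2 _ c2'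
      have hg' := corrT_good keep' [] Q _ c1 _ c1'
      have hMp := hM.2 pq (hMgM hpq) pq' (hMgM hpq')
      simp only [hf]
      refine ⟨?_, ?_, ?_⟩
      · exact hMp.1.trans (hg'.1.symm.trans hg.1)
      · exact hMp.2.1.trans (hg'.2.1.symm.trans hg.2.1)
      · exact hMp.2.2.trans (hg'.2.2.symm.trans hg.2.2)
  -- weights agree
  have hw : weight T C' Mg = weight T C M' := by
    rw [weight, weight, hM', Finset.sum_image hinj]
    apply Finset.sum_congr rfl
    intro pq hpq
    obtain ⟨c1, c2⟩ := hMgkey pq hpq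
    have hl1 := corrT_label keep' [] Q _ c1
    have hl2 := corrT_label keep [] Q _ c2
    simp only at hl1 hl2
    simp only [hf]
    rw [← hl2, hl1]
  have := weight_le_simi hM'match
  omega

end Simi

end RTree

namespace RTree
variable {α : Type} [DecidableEq α]

theorem segment_le (T Q : RTree α) (i j i' j' : ℕ)
    (h : window Q i' j' = window Q i j ∨
      ∃ x, window Q i' j' = window Q i j ++ [x] ∨ window Q i' j' = x :: window Q i j) :
    simi T (segment Q i' j') ≤ simi T (segment Q i j) + 2 := by
  rw [segment, segment]
  obtain h | ⟨x, h | h⟩ := h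
  · refine simi_contract_le T Q _ _ [] ?_ ?_ <;> intro p <;> rw [h] <;> intro <;> first | assumption | rfl
  · refine simi_contract_le T Q _ _ x ?_ ?_
    · intro p hp
      rw [h]
      simp only [decide_eq_true_eq] at hp ⊢
      rw [List.count_append]
      omega
    · intro p hp
      rw [h]
      have : List.count p [x] = 0 := by
        rw [List.count_cons, List.count_nil]
        simp only [beq_iff_eq]
        rw [if_neg (by exact fun hc => hp hc.symm)]
      rw [List.count_append, this]
      simp
  · refine simi_contract_le T Q _ _ x ?_ ?_
    · intro p hp
      rw [h]
      simp only [decide_eq_true_eq] at hp ⊢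
      rw [List.count_cons]
      omega
    · intro p hp
      rw [h, List.count_cons]
      simp only [beq_iff_eq]
      rw [if_neg (by exact fun hc => hp hc.symm), Nat.add_zero]

end RTree



/-- extending a segment of the (doubled Euler tour of the) unrooted tree `Q`
by one position increases the similarity with a fixed rooted tree `T` by at most 2
(indices are 0-based). -/
theorem stmt4 {α : Type} [DecidableEq α] (T Q : RTree α) (i j : ℕ)
    (hij : i ≤ j) (hlen : j - i + 1 ≤ 2 * Q.numEdges) :
    RTree.simi T (Q.segment i (j + 1)) ≤ RTree.simi T (Q.segment i j) + 2 ∧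
    (1 ≤ i → RTree.simi T (Q.segment (i - 1) j) ≤ RTree.simi T (Q.segment i j) + 2) := by
  constructor
  · apply RTree.segment_le
    rw [RTree.window, RTree.window, show j + 1 - i = (j - i) + 1 by omega, List.take_succ]
    cases ho : ((Q.dblTour).drop i)[j - i]? with
    | none => left; simp
    | some x => right; exact ⟨x, Or.inl rfl⟩
  · intro hi
    apply RTree.segment_le
    by_cases hlt : i - 1 < (Q.dblTour).length
    · right
      refine ⟨(Q.dblTour)[i-1], Or.inr ?_⟩
      rw [RTree.window, RTree.window, show j - (i - 1) = (j - i) + 1 by omega,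
        List.drop_eq_getElem_cons hlt, List.take_succ_cons,
        show i - 1 + 1 = i by omega]
    · left
      rw [RTree.window, RTree.window, List.drop_eq_nil_of_le (by omega),
        List.drop_eq_nil_of_le (by omega)]
      simp
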